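/- arXiv:1207.0723 — 2 statements merged into one kernel-verified Lean document; each statement's English description precedes it below -/
import Mathlib

section
/- Fix an integer N ≥ 1, γ ∈ ℝ and λ ∈ ℂ^N, and let w ∈ S_N. Suppose f ∈ sol^γ_λ satisfies f(0) = 0. If f vanishes identically on the alcove w̃^{-1} ℝ^N_+ for every w̃ ∈ S_N whose Coxeter length satisfies ℓ(w̃) < ℓ(w), then f vanishes identically on the alcove w^{-1} ℝ^N_+. -/
open scoped BigOperators
open MeasureTheory Complex

noncomputable section

abbrev Pt (N : ℕ) := Fin N → ℝ
abbrev Fn (N : ℕ) := Pt N → ℂ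

/-- The permutation `w` acting on points: `(w • x) j = x (w⁻¹ j)`. -/
def permPt {N : ℕ} (w : Equiv.Perm (Fin N)) (x : Pt N) : Pt N := fun j => x (w⁻¹ j)

/-- The fundamental (positive) alcove `ℝ^N_+ = {x : x_1 > … > x_N}`. -/
def posAlcove (N : ℕ) : Set (Pt N) := {x | ∀ i j : Fin N, i < j → x j < x i}

/-- The alcove `w⁻¹ ℝ^N_+`. -/
def alcove {N : ℕ} (w : Equiv.Perm (Fin N)) : Set (Pt N) := {x | permPt w x ∈ posAlcove N}

/-- Regular vectors: pairwise distinct coordinates. -/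
def regPts (N : ℕ) : Set (Pt N) := {x | ∀ i j : Fin N, i ≠ j → x i ≠ x j}

/-- Partial derivative in the `j`-th coordinate. -/
def pd {N : ℕ} (j : Fin N) (f : Fn N) : Fn N :=
  fun x => deriv (fun t : ℝ => f (Function.update x j t)) (x j)

/-- The plane wave `e^{iλ}`. -/
def planeWave {N : ℕ} (lam : Fin N → ℂ) : Fn N :=
  fun x => Complex.exp (Complex.I * ∑ j, lam j * (x j : ℂ))

/-- The integral operator `I_{jk}`:
`(I_{jk} f)(x) = ∫_0^{x_j-x_k} f(x - y(e_j - e_k)) dy`. -/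
def Iop {N : ℕ} (j k : Fin N) (f : Fn N) : Fn N :=
  fun x => ∫ y in (0:ℝ)..(x j - x k),
    f (Function.update (Function.update x j (x j - y)) k (x k + y))

/-- The integral-reflection operator `s^γ` associated to the transposition `(j k)`. -/
def sIR {N : ℕ} (γ : ℝ) (j k : Fin N) (f : Fn N) : Fn N :=
  fun x => f (permPt (Equiv.swap j k) x) + (γ : ℂ) * Iop j k f x

/-- The integral-reflection operator for the simple transposition `s_j = (j, j+1)`
(zero-based); identity for out-of-range `j`. -/
def sSimple {N : ℕ} (γ : ℝ) (j : ℕ) (f : Fn N) : Fn N :=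
  if h : j + 1 < N then sIR γ ⟨j, Nat.lt_of_succ_lt h⟩ ⟨j + 1, h⟩ f else f

/-- `w^γ` computed from a word `L` of simple reflections:
`wordOp γ [i₁,…,i_l] f = s_{i₁}^γ (⋯ (s_{i_l}^γ f))`. -/
def wordOp {N : ℕ} (γ : ℝ) (L : List ℕ) (f : Fn N) : Fn N :=
  L.foldr (fun j g => sSimple γ j g) f

/-- The simple transposition `s_j` (zero-based); identity for out-of-range `j`. -/
def simpleT (N : ℕ) (j : ℕ) : Equiv.Perm (Fin N) :=
  if h : j + 1 < N then Equiv.swap ⟨j, Nat.lt_of_succ_lt h⟩ ⟨j + 1, h⟩ else 1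

/-- The permutation represented by a word of simple reflections. -/
def wordPerm (N : ℕ) (L : List ℕ) : Equiv.Perm (Fin N) := (L.map (simpleT N)).prod

/-- `P` is the propagation operator `P^γ_N`: for continuous `f`, `P f` is continuous and
on the alcove `w⁻¹ ℝ^N_+` it equals `(w^γ f)(w x)`, where `w^γ` may be computed from any
word of simple reflections representing `w` (the operators `s_j^γ` satisfy the relations
of the symmetric group, so this does not depend on the word). -/
def IsPropagation {N : ℕ} (γ : ℝ) (P : Fn N → Fn N) : Prop :=
  ∀ f : Fn N, Continuous f →
    Continuous (P f) ∧
    ∀ (w : Equiv.Perm (Fin N)) (L : List ℕ),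
      (∀ j ∈ L, j + 1 < N) → wordPerm N L = w →
      ∀ x ∈ alcove w, P f x = wordOp γ L f (permPt w x)

open scoped Classical in
/-- The operator `Λ_j` entering the Dunkl-type operator `∂_j^γ = ∂_j - γ Λ_j`. -/
def LambdaOp {N : ℕ} (j : Fin N) (f : Fn N) : Fn N := fun x =>
  (∑ k : Fin N, if k < j ∧ x k < x j then f (permPt (Equiv.swap j k) x) else 0)
    - ∑ k : Fin N, if j < k ∧ x j < x k then f (permPt (Equiv.swap j k) x) else 0

/-- Membership in `CB^∞(ℝ^N)`: continuous, and smooth on every alcove. -/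
def CBsmooth {N : ℕ} (f : Fn N) : Prop :=
  Continuous f ∧ ∀ w : Equiv.Perm (Fin N), ContDiffOn ℝ (⊤ : ℕ∞) f (alcove w)

/-- Membership in `sol^γ_λ`: lies in `CB^∞(ℝ^N)` and satisfies `∂_j^γ f = iλ_j f`
on the regular vectors for every `j`. -/
def memSol {N : ℕ} (γ : ℝ) (lam : Fin N → ℂ) (f : Fn N) : Prop :=
  CBsmooth f ∧ ∀ j : Fin N, ∀ x ∈ regPts N,
    pd j f x - (γ : ℂ) * LambdaOp j f x = Complex.I * lam j * f x

open scoped Classical in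
/-- Coxeter length = number of inversions. -/
def invCount {N : ℕ} (w : Equiv.Perm (Fin N)) : ℕ :=
  (Finset.univ.filter fun p : Fin N × Fin N => p.1 < p.2 ∧ w p.2 < w p.1).card

/-- `x + δ(e_j - e_k)`. -/
def jumpShift {N : ℕ} (j k : Fin N) (δ : ℝ) (x : Pt N) : Pt N :=
  Function.update (Function.update x j (x j + δ)) k (x k - δ)

/-- The derivative jump conditions with coupling `γ`: at every subregular point of
every wall `{x_j = x_k}` (`j < k`), the jump of `(∂_j - ∂_k) f` equals `2γ f(x)`. -/
def SatisfiesJump {N : ℕ} (γ : ℝ) (f : Fn N) : Prop :=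
  ∀ j k : Fin N, j < k → ∀ x : Pt N, x j = x k →
    (∀ l m : Fin N, l < m → ¬(l = j ∧ m = k) → x l ≠ x m) →
    Filter.Tendsto
      (fun δ : ℝ =>
        (pd j f (jumpShift j k δ x) - pd k f (jumpShift j k δ x))
          - (pd j f (jumpShift j k (-δ) x) - pd k f (jumpShift j k (-δ) x)))
      (nhdsWithin 0 (Set.Ioi 0)) (nhds (2 * (γ : ℂ) * f x))

open scoped Classical in
/-- Indicator of a strictly decreasing chain of real numbers. -/
def chainInd (l : List ℝ) : ℂ := if List.Chain' (fun a b => b < a) l then 1 else 0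

/-- Iterated integral entering `ê⁻_{μ;i}`: for the list `[i₁,…,i_n]`, the upper limit of
the `y_m`-integral is `x_{i_{m-1}}` (threaded through `ub`, starting at `x_{N+1}`), the lower
limit is `x_{i_m}`, and the coordinate `i_m` of the argument is replaced by `y_m`. -/
def eMinusAux {N : ℕ} (μ : ℂ) (f : Fn N) (x : Pt (N + 1)) :
    List (Fin N) → ℝ → Pt N → ℂ
  | [], _, z => f z
  | i :: rest, ub, z =>
      ∫ y in (x i.castSucc)..ub,
        Complex.exp (Complex.I * μ * ((x i.castSucc - y : ℝ) : ℂ)) *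
          eMinusAux μ f x rest (x i.castSucc) (Function.update z i y)

/-- The elementary creation operator `ê⁻_{μ;i}`. -/
def ehatMinus {N : ℕ} (μ : ℂ) (l : List (Fin N)) (f : Fn N) : Fn (N + 1) :=
  fun x =>
    chainInd (x (Fin.last N) :: l.map fun i => x i.castSucc) *
      Complex.exp (Complex.I * μ * ((x (Fin.last N) : ℝ) : ℂ)) *
      eMinusAux μ f x l (x (Fin.last N)) (fun j => x j.castSucc)

/-- Iterated integral entering `ê⁺_{μ;i}`: the lower limit of the `y_m`-integral is
`x_{i_{m+1}+1}` (the coordinate of the next entry, or `x_1` at the end), the upper limit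
is `x_{i_m+1}`, and the coordinate `i_m` of the argument is replaced by `y_m`. -/
def ePlusAux {N : ℕ} (μ : ℂ) (f : Fn N) (x : Pt (N + 1)) :
    List (Fin N) → Pt N → ℂ
  | [], z => f z
  | i :: rest, z =>
      ∫ y in (match rest with
              | [] => x 0
              | j :: _ => x j.succ)..(x i.succ),
        Complex.exp (Complex.I * μ * ((x i.succ - y : ℝ) : ℂ)) *
          ePlusAux μ f x rest (Function.update z i y)

/-- The elementary creation operator `ê⁺_{μ;i}`. -/
def ehatPlus {N : ℕ} (μ : ℂ) (l : List (Fin N)) (f : Fn N) : Fn (N + 1) :=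
  fun x =>
    chainInd ((l.map fun i => x i.succ) ++ [x 0]) *
      Complex.exp (Complex.I * μ * ((x 0 : ℝ) : ℂ)) *
      ePlusAux μ f x l (fun j => x j.succ)

/-- The non-symmetric creation operator
`b⁻_μ = ∑_{n=0}^N γⁿ ∑_{i ∈ 𝔦ⁿ_{[1,N]}} ê⁻_{μ;i}` (tuples of pairwise distinct indices
are encoded as injections `Fin n ↪ Fin N`). -/
def bMinus {N : ℕ} (γ : ℝ) (μ : ℂ) (f : Fn N) : Fn (N + 1) :=
  fun x => ∑ n ∈ Finset.range (N + 1), (γ : ℂ) ^ n *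
    ∑ e : Fin n ↪ Fin N, ehatMinus μ (List.ofFn ⇑e) f x

/-- The non-symmetric creation operator `b⁺_μ`. -/
def bPlus {N : ℕ} (γ : ℝ) (μ : ℂ) (f : Fn N) : Fn (N + 1) :=
  fun x => ∑ n ∈ Finset.range (N + 1), (γ : ℂ) ^ n *
    ∑ e : Fin n ↪ Fin N, ehatPlus μ (List.ofFn ⇑e) f x

/-- `φ̌⁺`: evaluate the first coordinate at `x⁺`. -/
def phiCheckPlus {k : ℕ} (xp : ℝ) (f : Fn (k + 1)) : Fn k := fun x => f (Fin.cons xp x)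

/-- `φ̌⁻`: evaluate the last coordinate at `x⁻`. -/
def phiCheckMinus {k : ℕ} (xm : ℝ) (f : Fn (k + 1)) : Fn k := fun x => f (Fin.snoc x xm)

/-- `b^ε_μ`, `ε = +` encoded as `true` and `ε = -` as `false`. -/
def bEps (ε : Bool) {k : ℕ} (γ : ℝ) (μ : ℂ) (f : Fn k) : Fn (k + 1) :=
  if ε then bPlus γ μ f else bMinus γ μ f

/-- `ê^ε_{μ;i}`. -/
def ehatEps (ε : Bool) {N : ℕ} (μ : ℂ) (l : List (Fin N)) (f : Fn N) : Fn (N + 1) :=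
  if ε then ehatPlus μ l f else ehatMinus μ l f

/-- `φ̌^ε`. -/
def phiEps (ε : Bool) {k : ℕ} (xp xm : ℝ) (f : Fn (k + 1)) : Fn k :=
  if ε then phiCheckPlus xp f else phiCheckMinus xm f

/-- `a^ε_μ = φ̌^ε ∘ b^ε_μ`. -/
def aEps (ε : Bool) {k : ℕ} (γ : ℝ) (xp xm : ℝ) (μ : ℂ) (f : Fn k) : Fn k :=
  phiEps ε xp xm (bEps ε γ μ f)

/-- The sign `ε = ±1` of `ε ∈ {+,-}`. -/
def sgn (ε : Bool) : ℂ := if ε then 1 else -1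

/-- `s⁺` (swap of the first two coordinates of `ℝ^{N+2}`) resp. `s⁻` (swap of the last two). -/
def sEps (ε : Bool) (N : ℕ) : Equiv.Perm (Fin (N + 2)) :=
  if ε then Equiv.swap 0 1 else Equiv.swap ⟨N, by omega⟩ ⟨N + 1, by omega⟩

/-- Iterated integral entering `č⁺_{μ;i}` (the variables `y_1,…,y_n`). -/
def cAuxPlus {N : ℕ} (μ : ℂ) (xp : ℝ) (x : Pt N) (g : Pt N → ℂ) :
    List (Fin N) → Pt N → ℂ
  | [], z => g z
  | i :: rest, z =>
      ∫ y in (match rest with | [] => xp | j :: _ => x j)..(x i),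
        Complex.exp (Complex.I * μ * ((x i - y : ℝ) : ℂ)) *
          cAuxPlus μ xp x g rest (Function.update z i y)

/-- The elementary operator `č⁺_{μ;i}` (with `x_{i_0} := x⁻` and `x_{i_{n+1}} := x⁺`;
the variable `y_0` is plugged in as the final argument of `f`). -/
def cCheckPlus {N : ℕ} (μ : ℂ) (xp xm : ℝ) (l : List (Fin N)) (f : Fn (N + 1)) : Fn N :=
  fun x =>
    chainInd (l.map x) * Complex.exp (Complex.I * μ * ((xp : ℝ) : ℂ)) *
      ∫ y0 in (match l with | [] => xp | i :: _ => x i)..xm,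
        Complex.exp (Complex.I * μ * ((xm - y0 : ℝ) : ℂ)) *
          cAuxPlus μ xp x (fun z => f (Fin.snoc z y0)) l x

/-- Iterated integral entering `č⁻_{μ;i}` (the variables `y_1,…,y_{n+1}`;
the variable `y_{n+1}` is plugged in as the first argument of `f`). -/
def cAuxMinus {N : ℕ} (μ : ℂ) (xp : ℝ) (x : Pt N) (f : Fn (N + 1)) :
    List (Fin N) → ℝ → Pt N → ℂ
  | [], ub, z =>
      ∫ y in xp..ub, Complex.exp (Complex.I * μ * ((xp - y : ℝ) : ℂ)) * f (Fin.cons y z)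
  | i :: rest, ub, z =>
      ∫ y in (x i)..ub,
        Complex.exp (Complex.I * μ * ((x i - y : ℝ) : ℂ)) *
          cAuxMinus μ xp x f rest (x i) (Function.update z i y)

/-- The elementary operator `č⁻_{μ;i}` (with `x_{i_0} := x⁻` and `x_{i_{n+1}} := x⁺`). -/
def cCheckMinus {N : ℕ} (μ : ℂ) (xp xm : ℝ) (l : List (Fin N)) (f : Fn (N + 1)) : Fn N :=
  fun x => chainInd (l.map x) * Complex.exp (Complex.I * μ * ((xm : ℝ) : ℂ)) *
    cAuxMinus μ xp x f l xm x

/-- `č^ε_{μ;i}`. -/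
def cCheckEps (ε : Bool) {N : ℕ} (μ : ℂ) (xp xm : ℝ) (l : List (Fin N)) (f : Fn (N + 1)) :
    Fn N :=
  if ε then cCheckPlus μ xp xm l f else cCheckMinus μ xp xm l f

/-- The operator `c⁺_μ = ∑_{n=0}^N γ^{n+1} ∑_i č⁺_{μ;i}`. -/
def cPlusOp {N : ℕ} (γ : ℝ) (μ : ℂ) (xp xm : ℝ) (f : Fn (N + 1)) : Fn N :=
  fun x => ∑ n ∈ Finset.range (N + 1), (γ : ℂ) ^ (n + 1) *
    ∑ e : Fin n ↪ Fin N, cCheckPlus μ xp xm (List.ofFn ⇑e) f x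

/-- The operator `c⁻_μ = ∑_{n=0}^N γ^{n+1} ∑_i č⁻_{μ;i}`. -/
def cMinusOp {N : ℕ} (γ : ℝ) (μ : ℂ) (xp xm : ℝ) (f : Fn (N + 1)) : Fn N :=
  fun x => ∑ n ∈ Finset.range (N + 1), (γ : ℂ) ^ (n + 1) *
    ∑ e : Fin n ↪ Fin N, cCheckMinus μ xp xm (List.ofFn ⇑e) f x

/-- `c^ε_μ`. -/
def cEps (ε : Bool) {N : ℕ} (γ : ℝ) (μ : ℂ) (xp xm : ℝ) (f : Fn (N + 1)) : Fn N :=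
  if ε then cPlusOp γ μ xp xm f else cMinusOp γ μ xp xm f

/-- The closed box `J^M = [x⁺,x⁻]^M`. -/
def box (M : ℕ) (xp xm : ℝ) : Set (Pt M) := {x | ∀ j, x j ∈ Set.Icc xp xm}

/-- The `L²(J^M)` inner product `⟨u,v⟩_M = ∫_{J^M} u · conj v`. -/
def ipJ {M : ℕ} (xp xm : ℝ) (u v : Fn M) : ℂ :=
  ∫ x in box M xp xm, u x * (starRingEnd ℂ) (v x)

/-- Smooth functions compactly supported in the open box `(x⁺,x⁻)^M`. -/
def IsTestFn {M : ℕ} (xp xm : ℝ) (f : Fn M) : Prop :=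
  ContDiff ℝ (⊤ : ℕ∞) f ∧ HasCompactSupport f ∧ ∀ x, f x ≠ 0 → ∀ j, x j ∈ Set.Ioo xp xm

/-- The symmetrizer `𝒮_N = (1/N!) ∑_{w ∈ S_N} w`. -/
def symN (N : ℕ) (f : Fn N) : Fn N :=
  fun x => (N.factorial : ℂ)⁻¹ * ∑ w : Equiv.Perm (Fin N), f (permPt w⁻¹ x)

open scoped Classical in
/-- `G^γ_μ = ∏_{j<k} (μ_j - μ_k - iγ)/(μ_j - μ_k)`. -/
def Gcoef {N : ℕ} (γ : ℝ) (mu : Fin N → ℂ) : ℂ :=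
  ∏ p ∈ Finset.univ.filter (fun p : Fin N × Fin N => p.1 < p.2),
    (mu p.1 - mu p.2 - Complex.I * (γ : ℂ)) / (mu p.1 - mu p.2)

/-- The decreasing rearrangement `x↓`. -/
def decRearrange {N : ℕ} (x : Pt N) : Pt N := fun j => x (Tuple.sort x (Fin.rev j))

/-- The Bethe wavefunction
`Ψ_λ(x) = (1/N!) ∑_{w ∈ S_N} G^γ_{wλ} exp(i ∑_j (wλ)_j (x↓)_j)`. -/
def Bethe {N : ℕ} (γ : ℝ) (lam : Fin N → ℂ) : Fn N :=
  fun x => (N.factorial : ℂ)⁻¹ * ∑ w : Equiv.Perm (Fin N),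
    Gcoef γ (fun j => lam (w⁻¹ j)) *
      Complex.exp (Complex.I * ∑ j, lam (w⁻¹ j) * ((decRearrange x j : ℝ) : ℂ))

/-- The transpositions of consecutive entries of a list:
`adjSwaps [a₁,…,a_m] = [(a₁ a₂), (a₂ a₃), …, (a_{m-1} a_m)]`. -/
def adjSwaps {M : ℕ} : List (Fin M) → List (Equiv.Perm (Fin M))
  | [] => []
  | [_] => []
  | a :: b :: rest => Equiv.swap a b :: adjSwaps (b :: rest)

/-- `b⁻_{λ_N} (b⁻_{λ_{N-1}} (⋯ (b⁻_{λ_1} 1)))`. -/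
def iterBMinus (γ : ℝ) : (N : ℕ) → (Fin N → ℂ) → Fn N
  | 0, _ => fun _ => 1
  | N + 1, lam => bMinus γ (lam (Fin.last N)) (iterBMinus γ N (fun j => lam j.castSucc))

/-- `b⁺_{λ_1} (b⁺_{λ_2} (⋯ (b⁺_{λ_N} 1)))`. -/
def iterBPlus (γ : ℝ) : (N : ℕ) → (Fin N → ℂ) → Fn N
  | 0, _ => fun _ => 1
  | N + 1, lam => bPlus γ (lam 0) (iterBPlus γ N (fun j => lam j.succ))


section Statement2Aux

variable {N : ℕ}

lemma permPt_mul (u v : Equiv.Perm (Fin N)) (x : Pt N) :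
    permPt (u * v) x = permPt u (permPt v x) := by
  funext j
  simp [permPt, mul_inv_rev]

lemma mem_alcove_iff (w : Equiv.Perm (Fin N)) (x : Pt N) :
    x ∈ alcove w ↔ ∀ i j : Fin N, i < j → x (w⁻¹ j) < x (w⁻¹ i) := Iff.rfl

lemma alcove_lt {w : Equiv.Perm (Fin N)} {x : Pt N} (hx : x ∈ alcove w)
    {a b : Fin N} (h : w a < w b) : x b < x a := by
  have h2 := (mem_alcove_iff w x).1 hx (w a) (w b) h
  simpa using h2

lemma alcove_wlt {w : Equiv.Perm (Fin N)} {x : Pt N} (hx : x ∈ alcove w)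
    {a b : Fin N} (h : x a < x b) : w b < w a := by
  rcases lt_trichotomy (w a) (w b) with h1 | h1 | h1
  · exact absurd (alcove_lt hx h1) (not_lt.2 h.le)
  · exact absurd (congrArg x (w.injective h1)) h.ne
  · exact h1

lemma alcove_reg {w : Equiv.Perm (Fin N)} {x : Pt N} (hx : x ∈ alcove w) :
    x ∈ regPts N := by
  intro i j hij
  rcases lt_trichotomy (w i) (w j) with h1 | h1 | h1
  · exact (alcove_lt hx h1).ne'
  · exact absurd (w.injective h1) hij
  · exact (alcove_lt hx h1).ne

lemma alcove_eq_iInter (w : Equiv.Perm (Fin N)) :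
    alcove w = ⋂ p : Fin N × Fin N,
      (if p.1 < p.2 then {x : Pt N | x (w⁻¹ p.2) < x (w⁻¹ p.1)} else Set.univ) := by
  ext x
  simp only [Set.mem_iInter, mem_alcove_iff]
  constructor
  · intro hx p
    by_cases h : p.1 < p.2
    · simpa [h] using hx p.1 p.2 h
    · simp [h]
  · intro hx i j hij
    have := hx (i, j)
    simpa [hij] using this

lemma isOpen_alcove (w : Equiv.Perm (Fin N)) : IsOpen (alcove w) := by
  rw [alcove_eq_iInter]
  refine isOpen_iInter_of_finite fun p => ?_
  by_cases h : p.1 < p.2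
  · simp only [h, if_true]
    exact isOpen_lt (continuous_apply _) (continuous_apply _)
  · simp only [h, if_false]
    exact isOpen_univ

lemma convex_alcove (w : Equiv.Perm (Fin N)) : Convex ℝ (alcove w) := by
  rw [alcove_eq_iInter]
  refine convex_iInter fun p => ?_
  by_cases h : p.1 < p.2
  · simp only [h, if_true]
    have hs : {x : Pt N | x (w⁻¹ p.2) < x (w⁻¹ p.1)}
        = (fun x : Pt N => x (w⁻¹ p.2) - x (w⁻¹ p.1)) ⁻¹' (Set.Iio 0) := by
      ext x
      simp [sub_neg]
    rw [hs]
    exact (convex_Iio (0:ℝ)).linear_preimage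
      ((LinearMap.proj (w⁻¹ p.2) : Pt N →ₗ[ℝ] ℝ) - LinearMap.proj (w⁻¹ p.1))
  · simp only [h, if_false]
    exact convex_univ

lemma smul_mem_alcove {w : Equiv.Perm (Fin N)} {x : Pt N} (hx : x ∈ alcove w)
    {t : ℝ} (ht : 0 < t) : t • x ∈ alcove w := by
  rw [mem_alcove_iff] at hx ⊢
  intro i j hij
  have := hx i j hij
  simp only [Pi.smul_apply, smul_eq_mul]
  exact mul_lt_mul_of_pos_left this ht

lemma invCount_mul_swap_lt (w : Equiv.Perm (Fin N)) {j k : Fin N}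
    (hjk : j < k) (hw : w k < w j) :
    invCount (w * Equiv.swap j k) < invCount w := by
  classical
  set t := Equiv.swap j k with htdef
  have htt : ∀ a : Fin N, t (t a) = a := fun a => Equiv.swap_apply_self j k a
  have htj : t j = k := Equiv.swap_apply_left j k
  have htk : t k = j := Equiv.swap_apply_right j k
  set A := Finset.univ.filter
    (fun p : Fin N × Fin N => p.1 < p.2 ∧ (w * t) p.2 < (w * t) p.1) with hA
  set B := Finset.univ.filter
    (fun p : Fin N × Fin N => p.1 < p.2 ∧ w p.2 < w p.1) with hB
  have hjkB : (j, k) ∈ B := by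
    simp only [hB, Finset.mem_filter, Finset.mem_univ, true_and]
    exact ⟨hjk, hw⟩
  set ψ : Fin N × Fin N → Fin N × Fin N :=
    fun p => if t p.1 < t p.2 then (t p.1, t p.2) else p with hψ
  have hmaps : ∀ p ∈ A, ψ p ∈ B.erase (j, k) := by
    intro p hp
    rw [hA, Finset.mem_filter] at hp
    simp only [Finset.mem_univ, true_and, Equiv.Perm.mul_apply] at hp
    obtain ⟨hab, hval⟩ := hp
    rw [Finset.mem_erase]
    by_cases hc : t p.1 < t p.2
    · have hmem : (t p.1, t p.2) ∈ B := by
        simp only [hB, Finset.mem_filter, Finset.mem_univ, true_and]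
        exact ⟨hc, hval⟩
      have hne : (t p.1, t p.2) ≠ (j, k) := by
        intro he
        have h1 : t p.1 = j := congrArg Prod.fst he
        have h2 : t p.2 = k := congrArg Prod.snd he
        have e1 : p.1 = k := by rw [← htt p.1, h1, htj]
        have e2 : p.2 = j := by rw [← htt p.2, h2, htk]
        rw [e1, e2] at hab
        exact absurd hjk (not_lt.2 hab.le)
      simp only [hψ, hc, if_true]
      exact ⟨hne, hmem⟩
    · -- t p.2 < t p.1
      have hne12 : t p.1 ≠ t p.2 := fun he => hab.ne (t.injective he)
      have hc' : t p.2 < t p.1 := lt_of_le_of_ne (not_lt.1 hc) hne12.symm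
      simp only [hψ, hc, if_false]
      -- show p ∈ B and p ≠ (j,k)
      have key : w p.2 < w p.1 ∧ p ≠ (j, k) := by
        by_cases haj : p.1 = j
        · by_cases hbk : p.2 = k
          · exfalso
            rw [haj, hbk, htj, htk] at hval
            exact absurd hval (not_lt.2 hw.le)
          · have hbj : p.2 ≠ j := fun he => hab.ne (haj.trans he.symm)
            have htb : t p.2 = p.2 := Equiv.swap_apply_of_ne_of_ne hbj hbk
            have hval' : w p.2 < w k := by
              rw [haj, htj, htb] at hval
              exact hval
            refine ⟨?_, fun he => hbk (congrArg Prod.snd he)⟩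
            rw [haj]
            exact lt_trans hval' hw
        · by_cases hbk : p.2 = k
          · have hak : p.1 ≠ k := fun he => hab.ne (he.trans hbk.symm)
            have hta : t p.1 = p.1 := Equiv.swap_apply_of_ne_of_ne haj hak
            rw [hbk, htk, hta] at hval
            refine ⟨?_, fun he => haj (congrArg Prod.fst he)⟩
            rw [hbk]
            exact lt_trans hw hval
          · exfalso
            by_cases hak : p.1 = k
            · have hbj : p.2 ≠ j := by
                intro he
                rw [hak, he] at hab
                exact absurd (lt_trans hab hjk) (lt_irrefl _)
              have htb : t p.2 = p.2 := Equiv.swap_apply_of_ne_of_ne hbj hbk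
              rw [hak, htk, htb] at hc'
              rw [hak] at hab
              exact absurd (lt_trans hab (lt_trans hc' hjk)) (lt_irrefl _)
            · have hta : t p.1 = p.1 := Equiv.swap_apply_of_ne_of_ne haj hak
              by_cases hbj : p.2 = j
              · have : p.1 < j := hbj ▸ hab
                rw [hbj, htj, hta] at hc'
                exact absurd (lt_trans hjk (lt_trans hc' this)) (lt_irrefl _)
              · have htb : t p.2 = p.2 := Equiv.swap_apply_of_ne_of_ne hbj hbk
                rw [hta, htb] at hc'
                exact absurd (lt_trans hab hc') (lt_irrefl _)
      refine ⟨key.2, ?_⟩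
      simp only [hB, Finset.mem_filter, Finset.mem_univ, true_and]
      exact ⟨hab, key.1⟩
  have hinj : Set.InjOn ψ A := by
    intro p hp q hq he
    simp only [Finset.coe_filter, Set.mem_setOf_eq, hA, Finset.mem_filter] at hp hq
    have hpab : p.1 < p.2 := by
      have := hp
      simp only [Finset.mem_coe, hA, Finset.mem_filter, Finset.mem_univ, true_and] at this
      exact this.1
    have hqab : q.1 < q.2 := by
      have := hq
      simp only [Finset.mem_coe, hA, Finset.mem_filter, Finset.mem_univ, true_and] at this
      exact this.1
    by_cases hcp : t p.1 < t p.2 <;> by_cases hcq : t q.1 < t q.2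
    · simp only [hψ, hcp, hcq, if_true] at he
      have h1 : t p.1 = t q.1 := congrArg Prod.fst he
      have h2 : t p.2 = t q.2 := congrArg Prod.snd he
      exact Prod.ext (t.injective h1) (t.injective h2)
    · exfalso
      simp only [hψ, hcp, hcq, if_true, if_false] at he
      have h1 : t q.1 = t (t p.1) := by rw [← he]
      have h2 : t q.2 = t (t p.2) := by rw [← he]
      rw [htt] at h1 h2
      exact hcq (by rw [h1, h2]; exact hpab)
    · exfalso
      simp only [hψ, hcp, hcq, if_true, if_false] at he
      have h1 : t p.1 = t (t q.1) := by rw [he]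
      have h2 : t p.2 = t (t q.2) := by rw [he]
      rw [htt] at h1 h2
      exact hcp (by rw [h1, h2]; exact hqab)
    · simpa only [hψ, hcp, hcq, if_false] using he
  have h1 : A.card ≤ (B.erase (j, k)).card :=
    Finset.card_le_card_of_injOn ψ hmaps hinj
  have h2 : (B.erase (j, k)).card < B.card := Finset.card_erase_lt_of_mem hjkB
  have hAcard : invCount (w * t) = A.card := by
    rw [invCount, hA]
  have hBcard : invCount w = B.card := by
    rw [invCount, hB]
  rw [hAcard, hBcard]
  exact lt_of_le_of_lt h1 h2

lemma pd_eq_fderiv {f : Fn N} {x : Pt N} (hd : DifferentiableAt ℝ f x) (j : Fin N) :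
    pd j f x = fderiv ℝ f x (Pi.single j 1) := by
  have h1 : HasDerivAt (fun t : ℝ => Function.update x j t) (Pi.single j 1) (x j) := by
    rw [hasDerivAt_pi]
    intro i
    by_cases hij : i = j
    · subst hij
      simp only [Function.update_self, Pi.single_eq_same]
      exact hasDerivAt_id (x i)
    · simp only [Function.update_of_ne hij, Pi.single_eq_of_ne hij]
      exact hasDerivAt_const (x j) (x i)
  have hfd : HasFDerivAt f (fderiv ℝ f x) (Function.update x j (x j)) := by
    rw [Function.update_eq_self]
    exact hd.hasFDerivAt
  have h2 := hfd.comp_hasDerivAt (x j) h1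
  exact h2.deriv

end Statement2Aux

/-- if `f ∈ sol^γ_λ` vanishes at the origin and on every alcove indexed by
a permutation of smaller Coxeter length than `w`, then `f` vanishes on the alcove
`w⁻¹ ℝ^N_+`. -/
theorem statement_2 (N : ℕ) (hN : 1 ≤ N) (γ : ℝ) (lam : Fin N → ℂ)
    (w : Equiv.Perm (Fin N)) (f : Fn N) (hf : memSol γ lam f)
    (h0 : f (fun _ => 0) = 0)
    (hvan : ∀ w' : Equiv.Perm (Fin N), invCount w' < invCount w →
      ∀ x ∈ alcove w', f x = 0) :
    ∀ x ∈ alcove w, f x = 0 := by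
  classical
  obtain ⟨⟨hfc, hfsm⟩, heq⟩ := hf
  have hUopen : IsOpen (alcove w) := isOpen_alcove w
  have hUconv : Convex ℝ (alcove w) := convex_alcove w
  have hdiff : ∀ x ∈ alcove w, DifferentiableAt ℝ f x := fun x hx =>
    ((hfsm w).differentiableOn (by simp)).differentiableAt
      (hUopen.mem_nhds hx)
  -- the Dunkl equation degenerates to a plain ODE on the alcove
  have hpd : ∀ x ∈ alcove w, ∀ j : Fin N, pd j f x = Complex.I * lam j * f x := by
    intro x hx j
    have hreg : x ∈ regPts N := alcove_reg hx
    have hvanval : ∀ k : Fin N, invCount (w * Equiv.swap j k) < invCount w →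
        f (permPt (Equiv.swap j k) x) = 0 := by
      intro k hlen
      refine hvan (w * Equiv.swap j k) hlen _ ?_
      show permPt (w * Equiv.swap j k) (permPt (Equiv.swap j k) x) ∈ posAlcove N
      rw [← permPt_mul, mul_assoc, Equiv.swap_mul_self, mul_one]
      exact hx
    have hlam : LambdaOp j f x = 0 := by
      rw [LambdaOp]
      rw [Finset.sum_eq_zero, Finset.sum_eq_zero, sub_zero]
      · intro k _
        split_ifs with h
        · refine hvanval k ?_
          exact invCount_mul_swap_lt w h.1 (alcove_wlt hx h.2)
        · rfl
      · intro k _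
        split_ifs with h
        · refine hvanval k ?_
          rw [Equiv.swap_comm]
          exact invCount_mul_swap_lt w h.1 (alcove_wlt hx h.2)
        · rfl
    have := heq j x hreg
    rwa [hlam, mul_zero, sub_zero] at this
  -- the exponential weight
  set L : (Pt N) →L[ℝ] ℂ :=
    ∑ i : Fin N, (-(Complex.I * lam i)) •
      ((Complex.ofRealCLM).comp (ContinuousLinearMap.proj i)) with hL
  have hLapply : ∀ v : Pt N, L v = ∑ i : Fin N, (-(Complex.I * lam i)) * (v i : ℂ) := by
    intro v
    rw [hL]
    simp [ContinuousLinearMap.sum_apply, smul_eq_mul]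
  set g : Pt N → ℂ := fun y => f y * Complex.exp (L y) with hg
  have hgc : Continuous g := hfc.mul (Complex.continuous_exp.comp L.continuous)
  have hgderiv : ∀ x ∈ alcove w, HasFDerivAt g (0 : Pt N →L[ℝ] ℂ) x := by
    intro x hx
    have hE : HasFDerivAt (fun y : Pt N => Complex.exp (L y)) (Complex.exp (L x) • L) x :=
      (L.hasFDerivAt).cexp
    have hF : HasFDerivAt f (fderiv ℝ f x) x := (hdiff x hx).hasFDerivAt
    have hmul := hF.mul hE
    have hD : f x • (Complex.exp (L x) • L) + Complex.exp (L x) • fderiv ℝ f x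
        = (0 : Pt N →L[ℝ] ℂ) := by
      ext v
      have hv : v = ∑ i : Fin N, v i • (Pi.single i (1:ℝ) : Pt N) := by
        funext a
        simp [Pi.single_apply, Finset.sum_apply, mul_ite]
      have hFv : fderiv ℝ f x v = ∑ i : Fin N, (v i : ℂ) * (Complex.I * lam i * f x) := by
        conv_lhs => rw [hv]
        rw [map_sum]
        refine Finset.sum_congr rfl fun i _ => ?_
        rw [(fderiv ℝ f x).map_smul, ← pd_eq_fderiv (hdiff x hx) i, hpd x hx i]
        exact Complex.real_smul
      have hexp : ((f x • (Complex.exp (L x) • L) + Complex.exp (L x) • fderiv ℝ f x) v : ℂ)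
          = Complex.exp (L x) * (f x * L v + fderiv ℝ f x v) := by
        simp only [ContinuousLinearMap.add_apply, ContinuousLinearMap.smul_apply,
          smul_eq_mul]
        ring
      rw [hexp, hFv, hLapply v, ContinuousLinearMap.zero_apply, Finset.mul_sum,
        ← Finset.sum_add_distrib]
      rw [Finset.sum_eq_zero, mul_zero]
      intro i _
      ring
    rw [hD] at hmul
    exact hmul
  have hconst : ∀ x ∈ alcove w, ∀ y ∈ alcove w, g x = g y := by
    intro x hx y hy
    have hbd := hUconv.norm_image_sub_le_of_norm_hasFDerivWithin_le
      (f' := fun _ => (0 : Pt N →L[ℝ] ℂ)) (C := 0)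
      (fun z hz => (hgderiv z hz).hasFDerivWithinAt)
      (fun z _ => by simp) hx hy
    have h0' : ‖g y - g x‖ ≤ 0 := by simpa using hbd
    have := norm_le_zero_iff.mp h0'
    exact (sub_eq_zero.mp this).symm
  intro x hx
  have hseq : ∀ n : ℕ, g ((1 / ((n:ℝ)+1)) • x) = g x := fun n =>
    hconst _ (smul_mem_alcove hx (by positivity)) _ hx
  have htend : Filter.Tendsto (fun n : ℕ => (1 / ((n:ℝ)+1)) • x)
      Filter.atTop (nhds (0 : Pt N)) := by
    have h1 : Filter.Tendsto (fun n : ℕ => 1 / ((n:ℝ)+1)) Filter.atTop (nhds 0) :=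
      tendsto_one_div_add_atTop_nhds_zero_nat
    have h2 := h1.smul_const x
    simpa using h2
  have h2 : Filter.Tendsto (fun n : ℕ => g ((1/((n:ℝ)+1)) • x))
      Filter.atTop (nhds (g 0)) := (hgc.tendsto 0).comp htend
  have h3 : Filter.Tendsto (fun n : ℕ => g ((1/((n:ℝ)+1)) • x))
      Filter.atTop (nhds (g x)) := by
    simp only [hseq]
    exact tendsto_const_nhds
  have hgx0 : g x = g (0 : Pt N) := tendsto_nhds_unique h3 h2
  have hf0 : f (0 : Pt N) = 0 := h0
  have hg0 : g (0 : Pt N) = 0 := by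
    rw [hg]
    simp [hf0]
  have hgx : f x * Complex.exp (L x) = 0 := by
    have := hgx0.trans hg0
    rwa [hg] at this
  rcases mul_eq_zero.mp hgx with h | h
  · exact h
  · exact absurd h (Complex.exp_ne_zero _)

end
end

section
/- Fix an integer N ≥ 2, γ ∈ ℝ and λ ∈ ℂ^N, and let j ∈ {1, …, N−1} be such that λ_j ≠ λ_{j+1}. Then for every x ∈ ℝ^N, ψ_λ(s_j x) = ψ_{s_j λ}(x) − (iγ/(λ_j − λ_{j+1})) (ψ_λ(x) − ψ_{s_j λ}(x)), where s_j λ is obtained from λ by exchanging λ_j and λ_{j+1}. -/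
open scoped BigOperators
open MeasureTheory Complex

noncomputable section

section Aux

variable {N : ℕ}

lemma permPt_comp (u v : Equiv.Perm (Fin N)) (x : Pt N) :
    permPt u (permPt v x) = permPt (u * v) x := by
  funext m
  simp [permPt, mul_inv_rev, Equiv.Perm.mul_apply]

lemma continuous_permPt (w : Equiv.Perm (Fin N)) : Continuous (permPt w) :=
  continuous_pi fun _ => continuous_apply _

lemma continuous_planeWave (lam : Fin N → ℂ) : Continuous (planeWave lam) :=
  Complex.continuous_exp.comp (continuous_const.mul (continuous_finset_sum _ fun j _ =>
    continuous_const.mul (Complex.continuous_ofReal.comp (continuous_apply j))))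

lemma continuous_iopArg (j k : Fin N) :
    Continuous (fun p : Pt N × ℝ =>
      Function.update (Function.update p.1 j (p.1 j - p.2)) k (p.1 k + p.2)) := by
  apply continuous_pi; intro m
  rcases eq_or_ne m k with rfl | hk
  · simp only [Function.update_self]
    exact ((continuous_apply m).comp continuous_fst).add continuous_snd
  · simp only [Function.update_of_ne hk]
    rcases eq_or_ne m j with rfl | hj
    · simp only [Function.update_self]
      exact ((continuous_apply m).comp continuous_fst).sub continuous_snd
    · simp only [Function.update_of_ne hj]
      exact (continuous_apply m).comp continuous_fst

lemma continuous_Iop (j k : Fin N) {f : Fn N} (hf : Continuous f) :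
    Continuous (Iop j k f) := by
  unfold Iop
  exact intervalIntegral.continuous_parametric_intervalIntegral_of_continuous
    (f := fun x y => f (Function.update (Function.update x j (x j - y)) k (x k + y)))
    (hf.comp (continuous_iopArg j k))
    ((continuous_apply j).sub (continuous_apply k))

lemma continuous_sSimple (γ : ℝ) (j : ℕ) {f : Fn N} (hf : Continuous f) :
    Continuous (sSimple γ j f) := by
  unfold sSimple sIR
  split
  · exact (hf.comp (continuous_permPt _)).add (continuous_const.mul (continuous_Iop _ _ hf))
  · exact hf

lemma continuous_wordOp (γ : ℝ) (L : List ℕ) {f : Fn N} (hf : Continuous f) :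
    Continuous (wordOp γ L f) := by
  induction L with
  | nil => exact hf
  | cons i L ih => exact continuous_sSimple γ i ih

lemma intervalIntegrable_comp (j k : Fin N) {f : Fn N} (hf : Continuous f) (x : Pt N)
    (a b : ℝ) :
    IntervalIntegrable
      (fun y => f (Function.update (Function.update x j (x j - y)) k (x k + y)))
      volume a b :=
  ((hf.comp (continuous_iopArg j k)).comp (Continuous.prodMk_right x)).intervalIntegrable a b

lemma Iop_add_smul (j k : Fin N) (a b : ℂ) {f g : Fn N} (hf : Continuous f)
    (hg : Continuous g) (x : Pt N) :
    Iop j k (fun y => a * f y + b * g y) x = a * Iop j k f x + b * Iop j k g x := by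
  unfold Iop
  rw [intervalIntegral.integral_add ((intervalIntegrable_comp j k hf x 0 _).const_mul a)
      ((intervalIntegrable_comp j k hg x 0 _).const_mul b),
    intervalIntegral.integral_const_mul, intervalIntegral.integral_const_mul]

lemma sSimple_add_smul (γ : ℝ) (j : ℕ) (a b : ℂ) {f g : Fn N} (hf : Continuous f)
    (hg : Continuous g) :
    sSimple γ j (fun y => a * f y + b * g y)
      = fun y => a * sSimple γ j f y + b * sSimple γ j g y := by
  funext x
  unfold sSimple sIR
  split
  · beta_reduce
    rw [Iop_add_smul _ _ a b hf hg x]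
    ring
  · rfl

lemma wordOp_add_smul (γ : ℝ) (L : List ℕ) (a b : ℂ) {f g : Fn N}
    (hf : Continuous f) (hg : Continuous g) :
    wordOp γ L (fun y => a * f y + b * g y)
      = fun y => a * wordOp γ L f y + b * wordOp γ L g y := by
  induction L with
  | nil => rfl
  | cons i L ih =>
    show sSimple γ i (wordOp γ L fun y => a * f y + b * g y) = _
    rw [ih, sSimple_add_smul γ i a b (continuous_wordOp γ L hf) (continuous_wordOp γ L hg)]
    rfl

end Aux

section Aux2

variable {N : ℕ}

lemma planeWave_perm (lam : Fin N → ℂ) (w : Equiv.Perm (Fin N)) (x : Pt N) :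
    planeWave lam (permPt w x) = planeWave (lam ∘ w) x := by
  unfold planeWave permPt
  congr 1
  congr 1
  rw [← Equiv.sum_comp w (fun m => lam m * ((x (w⁻¹ m) : ℝ) : ℂ))]
  simp [Function.comp]

lemma sIR_planeWave (γ : ℝ) (a b : Fin N) (hab : a ≠ b) (lam : Fin N → ℂ)
    (hne : lam a ≠ lam b) :
    sIR γ a b (planeWave lam) = fun x =>
      (1 + Complex.I * (γ : ℂ) / (lam a - lam b)) * planeWave (lam ∘ (Equiv.swap a b)) x
      + (-(Complex.I * (γ : ℂ) / (lam a - lam b))) * planeWave lam x := by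
  have hμ : lam a - lam b ≠ 0 := sub_ne_zero.mpr hne
  have hc : -(Complex.I * (lam a - lam b)) ≠ 0 := by
    simp [Complex.I_ne_zero, hμ]
  funext x
  set μ := lam a - lam b with hμdef
  set S := ∑ m, lam m * ((x m : ℝ) : ℂ) with hS
  have hsum1 : ∀ y : ℝ,
      ∑ m, lam m * ((Function.update (Function.update x a (x a - y)) b (x b + y) m : ℝ) : ℂ)
        = S - μ * (y : ℂ) := by
    intro y
    have key : ∀ m : Fin N,
        lam m * ((Function.update (Function.update x a (x a - y)) b (x b + y) m : ℝ) : ℂ)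
          = lam m * ((x m : ℝ) : ℂ)
            + ((if m = a then -(lam a * (y:ℂ)) else 0) + (if m = b then lam b * (y:ℂ) else 0)) := by
      intro m
      rcases eq_or_ne m b with rfl | hb
      · rw [Function.update_self, if_neg (fun h => hab h.symm), if_pos rfl]
        push_cast; ring
      · rw [Function.update_of_ne hb, if_neg hb]
        rcases eq_or_ne m a with rfl | ha
        · rw [Function.update_self, if_pos rfl]
          push_cast; ring
        · rw [Function.update_of_ne ha, if_neg ha]; ring
    rw [Finset.sum_congr rfl (fun m _ => key m), Finset.sum_add_distrib,
      Finset.sum_add_distrib, Finset.sum_ite_eq' Finset.univ a, Finset.sum_ite_eq' Finset.univ b]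
    simp only [Finset.mem_univ, if_pos]
    rw [hμdef, hS]; ring
  have hswap : planeWave (lam ∘ (Equiv.swap a b)) x
      = planeWave lam x * Complex.exp (-(Complex.I * μ) * ((x a - x b : ℝ) : ℂ)) := by
    unfold planeWave
    have key2 : ∀ m : Fin N, lam (Equiv.swap a b m) * ((x m : ℝ) : ℂ)
        = lam m * ((x m : ℝ) : ℂ)
          + ((if m = a then (lam b - lam a) * ((x a : ℝ) : ℂ) else 0)
            + (if m = b then (lam a - lam b) * ((x b : ℝ) : ℂ) else 0)) := by
      intro m
      rcases eq_or_ne m a with rfl | ha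
      · rw [Equiv.swap_apply_left, if_pos rfl, if_neg hab]; ring
      · rcases eq_or_ne m b with rfl | hb
        · rw [Equiv.swap_apply_right, if_neg ha, if_pos rfl]; ring
        · rw [Equiv.swap_apply_of_ne_of_ne ha hb, if_neg ha, if_neg hb]; ring
    rw [← Complex.exp_add]
    congr 1
    show Complex.I * ∑ m, lam (Equiv.swap a b m) * ((x m : ℝ) : ℂ) = _
    rw [Finset.sum_congr rfl (fun m _ => key2 m), Finset.sum_add_distrib,
      Finset.sum_add_distrib, Finset.sum_ite_eq' Finset.univ a, Finset.sum_ite_eq' Finset.univ b]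
    simp only [Finset.mem_univ, if_pos]
    rw [hμdef, ← hS]
    push_cast; ring
  have hint : Iop a b (planeWave lam) x
      = planeWave lam x *
        ((Complex.exp (-(Complex.I * μ) * ((x a - x b : ℝ) : ℂ)) - 1) / (-(Complex.I * μ))) := by
    unfold Iop
    have hpt : ∀ y : ℝ,
        planeWave lam (Function.update (Function.update x a (x a - y)) b (x b + y))
          = planeWave lam x * Complex.exp (-(Complex.I * μ) * (y : ℂ)) := by
      intro y
      unfold planeWave
      rw [hsum1 y, ← Complex.exp_add, ← hS]
      congr 1
      ring
    rw [intervalIntegral.integral_congr (fun y _ => hpt y),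
      intervalIntegral.integral_const_mul, integral_exp_mul_complex hc]
    simp
  have hperm : planeWave lam (permPt (Equiv.swap a b) x)
      = planeWave (lam ∘ (Equiv.swap a b)) x := planeWave_perm lam _ x
  show planeWave lam (permPt (Equiv.swap a b) x) + (γ : ℂ) * Iop a b (planeWave lam) x = _
  rw [hperm, hint, hswap]
  have h1 : (-(Complex.I * μ))⁻¹ = Complex.I * μ⁻¹ := by
    rw [inv_neg, mul_inv, Complex.inv_I]; ring
  simp only [div_eq_mul_inv, h1]
  ring

lemma simpleT_eq {j : ℕ} (hj : j + 1 < N) :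
    simpleT N j = Equiv.swap ⟨j, Nat.lt_of_succ_lt hj⟩ ⟨j + 1, hj⟩ := dif_pos hj

lemma sSimple_eq {γ : ℝ} {j : ℕ} (hj : j + 1 < N) (f : Fn N) :
    sSimple γ j f = sIR γ ⟨j, Nat.lt_of_succ_lt hj⟩ ⟨j + 1, hj⟩ f := dif_pos hj

lemma wordPerm_cons (i : ℕ) (L : List ℕ) :
    wordPerm N (i :: L) = simpleT N i * wordPerm N L := by
  simp [wordPerm]

lemma wordPerm_append_single (L : List ℕ) (i : ℕ) :
    wordPerm N (L ++ [i]) = wordPerm N L * simpleT N i := by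
  simp [wordPerm]

lemma wordOp_append_single (γ : ℝ) (L : List ℕ) (i : ℕ) (f : Fn N) :
    wordOp γ (L ++ [i]) f = wordOp γ L (sSimple γ i f) := by
  simp [wordOp, List.foldr_append]

lemma word_of_list (n : ℕ) : ∀ l : List (Equiv.Perm (Fin (n + 1))),
    (∀ y ∈ l, ∃ i : Fin n, y = Equiv.swap i.castSucc i.succ) →
    ∃ L : List ℕ, (∀ j ∈ L, j + 1 < n + 1) ∧ wordPerm (n + 1) L = l.prod := by
  intro l
  induction l with
  | nil => exact fun _ => ⟨[], by simp, by simp [wordPerm]⟩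
  | cons y l ih =>
    intro hl
    obtain ⟨i, rfl⟩ := hl y List.mem_cons_self
    obtain ⟨L, hL1, hL2⟩ := ih (fun z hz => hl z (List.mem_cons_of_mem _ hz))
    refine ⟨i.val :: L, ?_, ?_⟩
    · intro m hm
      rcases List.mem_cons.mp hm with rfl | hm
      · exact Nat.succ_lt_succ i.isLt
      · exact hL1 m hm
    · rw [wordPerm_cons, hL2, List.prod_cons]
      congr 1
      rw [simpleT_eq (Nat.succ_lt_succ i.isLt)]
      rfl

lemma exists_word (n : ℕ) (w : Equiv.Perm (Fin (n + 1))) :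
    ∃ L : List ℕ, (∀ j ∈ L, j + 1 < n + 1) ∧ wordPerm (n + 1) L = w := by
  have hw : w ∈ Submonoid.closure
      (Set.range fun i : Fin n => Equiv.swap i.castSucc i.succ) := by
    rw [Equiv.Perm.mclosure_swap_castSucc_succ]; trivial
  obtain ⟨l, hl, rfl⟩ := Submonoid.exists_list_of_mem_closure hw
  exact word_of_list n l (fun y hy => by obtain ⟨i, hi⟩ := hl y hy; exact ⟨i, hi.symm⟩)

lemma exists_alcove {x : Pt N} (hx : x ∈ regPts N) : ∃ w, x ∈ alcove w := by
  have hinj : Function.Injective x := by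
    intro i j h
    by_contra hij
    exact hx i j hij h
  set σ := Tuple.sort x with hσ
  have hsm : StrictMono (x ∘ σ) :=
    (Tuple.monotone_sort x).strictMono_of_injective (hinj.comp σ.injective)
  refine ⟨(Fin.revPerm.trans σ)⁻¹, ?_⟩
  intro i j hij
  have hrev : Fin.rev j < Fin.rev i := Fin.rev_lt_rev.mpr hij
  show permPt _ x j < permPt _ x i
  simp only [permPt, inv_inv, Equiv.trans_apply, Fin.revPerm_apply]
  exact hsm hrev

lemma dense_regPts : Dense (regPts N) := by
  have hrw : regPts N = ⋂ p : Fin N × Fin N, {x : Pt N | p.1 ≠ p.2 → x p.1 ≠ x p.2} := by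
    ext x
    simp only [regPts, Set.mem_iInter, Set.mem_setOf_eq]
    exact ⟨fun h p hp => h p.1 p.2 hp, fun h i j hij => h (i, j) hij⟩
  rw [hrw]
  apply dense_iInter_of_isOpen
  · intro p
    by_cases hp : p.1 = p.2
    · simp [hp]
    · have : {x : Pt N | p.1 ≠ p.2 → x p.1 ≠ x p.2} = {x : Pt N | x p.1 ≠ x p.2} := by
        ext x; simp [hp]
      rw [this]
      exact isOpen_ne_fun (continuous_apply p.1) (continuous_apply p.2)
  · intro p
    by_cases hp : p.1 = p.2
    · simp [hp]
    · rw [Metric.dense_iff]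
      intro x r hr
      by_cases hx : x p.1 = x p.2
      · refine ⟨Function.update x p.1 (x p.1 + r / 2), ?_, ?_⟩
        · rw [Metric.mem_ball, dist_pi_lt_iff hr]
          intro m
          rcases eq_or_ne m p.1 with rfl | hm
          · rw [Function.update_self, Real.dist_eq]
            rw [add_sub_cancel_left, abs_of_pos (by linarith)]
            linarith
          · rw [Function.update_of_ne hm]
            simpa using hr
        · intro _
          rw [Function.update_self, Function.update_of_ne (Ne.symm hp), ← hx]
          intro h
          linarith
      · exact ⟨x, Metric.mem_ball_self hr, fun _ => hx⟩

end Aux2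


/-- for `λ_j ≠ λ_{j+1}` (zero-based: entries `j` and `j+1`),
`ψ_λ(s_j x) = ψ_{s_j λ}(x) - (iγ/(λ_j - λ_{j+1})) (ψ_λ(x) - ψ_{s_j λ}(x))`. -/
theorem statement_5 (N : ℕ) (hN : 2 ≤ N) (γ : ℝ) (lam : Fin N → ℂ)
    (P : Fn N → Fn N) (hP : IsPropagation γ P)
    (j : ℕ) (hj : j + 1 < N)
    (hne : lam ⟨j, Nat.lt_of_succ_lt hj⟩ ≠ lam ⟨j + 1, hj⟩) (x : Pt N) :
    P (planeWave lam)
        (permPt (Equiv.swap ⟨j, Nat.lt_of_succ_lt hj⟩ ⟨j + 1, hj⟩) x)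
      = P (planeWave (lam ∘ (Equiv.swap ⟨j, Nat.lt_of_succ_lt hj⟩ ⟨j + 1, hj⟩))) x
        - Complex.I * (γ : ℂ) / (lam ⟨j, Nat.lt_of_succ_lt hj⟩ - lam ⟨j + 1, hj⟩) *
          (P (planeWave lam) x
            - P (planeWave (lam ∘ (Equiv.swap ⟨j, Nat.lt_of_succ_lt hj⟩ ⟨j + 1, hj⟩))) x) := by
  obtain ⟨n, rfl⟩ : ∃ n, N = n + 1 := ⟨N - 1, by omega⟩
  set a : Fin (n + 1) := ⟨j, Nat.lt_of_succ_lt hj⟩ with ha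
  set b : Fin (n + 1) := ⟨j + 1, hj⟩ with hb
  have hab : a ≠ b := by
    simp only [ha, hb, ne_eq, Fin.mk.injEq]
    omega
  set s := Equiv.swap a b with hs
  set f := planeWave lam with hf
  set g := planeWave (lam ∘ s) with hg
  have hfc : Continuous f := continuous_planeWave _
  have hgc : Continuous g := continuous_planeWave _
  set c : ℂ := Complex.I * (γ : ℂ) / (lam a - lam b) with hcdef
  have key : ∀ y ∈ regPts (n + 1),
      P f (permPt s y) = (1 + c) * P g y + (-c) * P f y := by
    intro y hy
    obtain ⟨w, hw⟩ := exists_alcove hy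
    obtain ⟨L, hL1, hL2⟩ := exists_word n w
    have hsj : simpleT (n + 1) j = s := simpleT_eq hj
    have hss : s * s = 1 := Equiv.swap_mul_self a b
    have hps : permPt (w * s) (permPt s y) = permPt w y := by
      rw [permPt_comp, mul_assoc, hss, mul_one]
    have hy' : permPt s y ∈ alcove (w * s) := by
      show permPt (w * s) (permPt s y) ∈ posAlcove (n + 1)
      rw [hps]
      exact hw
    have hword' : wordPerm (n + 1) (L ++ [j]) = w * s := by
      rw [wordPerm_append_single, hL2, hsj]
    have h1 : P f (permPt s y)
        = wordOp γ (L ++ [j]) f (permPt (w * s) (permPt s y)) :=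
      (hP f hfc).2 (w * s) (L ++ [j])
        (fun m hm => by
          rcases List.mem_append.mp hm with hm | hm
          · exact hL1 m hm
          · rw [List.mem_singleton.mp hm]; exact hj)
        hword' _ hy'
    rw [hps, wordOp_append_single] at h1
    have h2 : sSimple γ j f = fun z => (1 + c) * g z + (-c) * f z := by
      rw [sSimple_eq hj]
      exact sIR_planeWave γ a b hab lam hne
    rw [h2, wordOp_add_smul γ L (1 + c) (-c) hgc hfc] at h1
    have h3 : P g y = wordOp γ L g (permPt w y) := (hP g hgc).2 w L hL1 hL2 y hw
    have h4 : P f y = wordOp γ L f (permPt w y) := (hP f hfc).2 w L hL1 hL2 y hw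
    rw [h1, h3, h4]
  have hc1 : Continuous fun y => P f (permPt s y) := (hP f hfc).1.comp (continuous_permPt s)
  have hc2 : Continuous fun y => (1 + c) * P g y + (-c) * P f y :=
    (continuous_const.mul (hP g hgc).1).add (continuous_const.mul (hP f hfc).1)
  have heq := Continuous.ext_on dense_regPts hc1 hc2 key
  have hx := congrFun heq x
  rw [hx]
  ring


end
end
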